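/- There do not exist positive integers a, b, c, d with a even, gcd(a,b)=1, gcd(c,d)=1, such that b²(c² − d²) = a²(4c² + d²) with c > d. -/

import Mathlib

set_option maxHeartbeats 1000000

private def P1 (c d : ℕ) : Prop :=
  0 < d ∧ d < c ∧ Nat.gcd c d = 1 ∧ ∃ q, (c^2 - d^2) * (4*c^2 + d^2) = q^2

private def P2 (m l : ℕ) : Prop :=
  0 < l ∧ 2*l < m ∧ Nat.gcd m l = 1 ∧ ∃ q, (m^2 - 4*l^2) * (m^2 + l^2) = q^2

/-! ### squares mod 8 -/

private lemma sq8_odd (x : ℕ) (h : x % 2 = 1) : x^2 % 8 = 1 := by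
  obtain ⟨k, rfl⟩ : ∃ k, x = 2*k+1 := ⟨x/2, by omega⟩
  obtain ⟨j, hj⟩ : Even (k*(k+1)) := Nat.even_mul_succ_self k
  have h1 : (2*k+1)^2 = 4*(k*(k+1)) + 1 := by ring
  rw [hj] at h1
  omega

private lemma sq8_even (x : ℕ) (h : x % 2 = 0) : x^2 % 8 = 0 ∨ x^2 % 8 = 4 := by
  obtain ⟨k, rfl⟩ : ∃ k, x = 2*k := ⟨x/2, by omega⟩
  have h1 : (2*k)^2 = 4*k^2 := by ring
  rcases Nat.even_or_odd k with hk | hk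
  · left
    obtain ⟨i, rfl⟩ := hk
    have h2 : (i+i)^2 = 4*(i*i) := by ring
    omega
  · right
    have h2 : k^2 % 8 = 1 := sq8_odd k (by obtain ⟨j, rfl⟩ := hk; omega)
    omega

private lemma sq8 (x : ℕ) : x^2 % 8 = 0 ∨ x^2 % 8 = 1 ∨ x^2 % 8 = 4 := by
  rcases Nat.even_or_odd x with hk | hk
  · rcases sq8_even x (by obtain ⟨i, rfl⟩ := hk; omega) with h' | h' <;> omega
  · have := sq8_odd x (by obtain ⟨j, rfl⟩ := hk; omega)
    omega

/-! ### coprime splitting of squares -/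

private lemma nat_split {a b c : ℕ} (h : Nat.gcd a b = 1) (e : a * b = c^2) :
    ∃ s, a = s^2 :=
  exists_eq_pow_of_mul_eq_pow (by rw [Nat.isUnit_iff]; exact h) e

private lemma nat_split2 {a b c : ℕ} (h : Nat.gcd a b = 1) (e : a * b = c^2) :
    ∃ s r, a = s^2 ∧ b = r^2 := by
  obtain ⟨s, hs⟩ := nat_split h e
  obtain ⟨r, hr⟩ := nat_split (by rwa [Nat.gcd_comm]) (by rwa [mul_comm])
  exact ⟨s, r, hs, hr⟩

private lemma sq_of_mul_sq {n b t : ℕ} (hb : 0 < b) (h : n * b^2 = t^2) :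
    ∃ e, n = e^2 := by
  have hd : b ∣ t := (Nat.pow_dvd_pow_iff (two_ne_zero)).mp ⟨n, by linarith [h]⟩
  obtain ⟨e, rfl⟩ := hd
  refine ⟨e, ?_⟩
  have h2 : b^2 * n = b^2 * e^2 := by ring_nf; ring_nf at h; linarith
  exact Nat.eq_of_mul_eq_mul_left (by positivity) h2

private lemma cop_leg2 {j k x y z : ℕ} (h : j*x^2 + k*y^2 = z^2) (hzy : Nat.gcd z y = 1) :
    Nat.gcd x y = 1 := by
  have h1 : Nat.gcd x y ∣ z := by
    have h2 : (Nat.gcd x y)^2 ∣ z^2 := by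
      have hx : Nat.gcd x y ∣ x := Nat.gcd_dvd_left _ _
      have hy : Nat.gcd x y ∣ y := Nat.gcd_dvd_right _ _
      rw [← h]
      exact dvd_add (Dvd.dvd.mul_left (pow_dvd_pow_of_dvd hx 2) j)
        (Dvd.dvd.mul_left (pow_dvd_pow_of_dvd hy 2) k)
    exact (Nat.pow_dvd_pow_iff two_ne_zero).mp h2
  have := Nat.dvd_gcd h1 (Nat.gcd_dvd_right x y)
  rw [hzy] at this
  exact Nat.eq_one_of_dvd_one this

private lemma cop_of_sq {r s : ℕ} (h : Nat.gcd (s^2) (r^2) = 1) : Nat.gcd r s = 1 := by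
  have h1 : Nat.gcd r s ∣ 1 := by
    rw [← h]
    exact Nat.dvd_gcd (dvd_trans (Nat.gcd_dvd_right r s) (dvd_pow_self s two_ne_zero))
      (dvd_trans (Nat.gcd_dvd_left r s) (dvd_pow_self r two_ne_zero))
  exact Nat.eq_one_of_dvd_one h1

private lemma cop_double {s l : ℕ} (hs : s % 2 = 1) (h : Nat.gcd s l = 1) :
    Nat.gcd s (2*l) = 1 := by
  have h2 : Nat.Coprime s 2 := by
    have hd : Nat.gcd s 2 ∣ 2 := Nat.gcd_dvd_right _ _
    rcases (Nat.prime_two).eq_one_or_self_of_dvd _ hd with h' | h'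
    · exact h'
    · exfalso
      have : (2:ℕ) ∣ s := h' ▸ Nat.gcd_dvd_left s 2
      omega
  exact Nat.Coprime.mul_right h2 h

/-! ### the gcd of the two factors divides 5 -/

private lemma gcd_five {E F c d : ℕ} (hcd : Nat.gcd c d = 1)
    (h5c : E + F = 5*c^2) (h5d : 4*E + 5*d^2 = F) :
    Nat.gcd E F = 1 ∨ Nat.gcd E F = 5 := by
  set g := Nat.gcd E F with hg
  have hE : g ∣ E := Nat.gcd_dvd_left _ _
  have hF : g ∣ F := Nat.gcd_dvd_right _ _
  have hc : g ∣ 5*c^2 := h5c ▸ dvd_add hE hF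
  have hd : g ∣ 5*d^2 := by
    have h' : 5*d^2 = F - 4*E := by omega
    rw [h']
    exact Nat.dvd_sub hF (Dvd.dvd.mul_left hE 4)
  have h5 : g ∣ 5 := by
    have := Nat.dvd_gcd hc hd
    rwa [Nat.gcd_mul_left, Nat.Coprime.pow 2 2 hcd, mul_one] at this
  exact (Nat.prime_five.eq_one_or_self_of_dvd g h5)

private lemma gcd_fiveB {E F m l : ℕ} (hml : Nat.gcd m l = 1)
    (h5m : E + 4*F = 5*m^2) (h5l : E + 5*l^2 = F) :
    Nat.gcd E F = 1 ∨ Nat.gcd E F = 5 := by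
  set g := Nat.gcd E F with hg
  have hE : g ∣ E := Nat.gcd_dvd_left _ _
  have hF : g ∣ F := Nat.gcd_dvd_right _ _
  have hc : g ∣ 5*m^2 := h5m ▸ dvd_add hE (Dvd.dvd.mul_left hF 4)
  have hd : g ∣ 5*l^2 := by
    have h' : 5*l^2 = F - E := by omega
    rw [h']
    exact Nat.dvd_sub hF hE
  have h5 : g ∣ 5 := by
    have := Nat.dvd_gcd hc hd
    rwa [Nat.gcd_mul_left, Nat.Coprime.pow 2 2 hml, mul_one] at this
  exact (Nat.prime_five.eq_one_or_self_of_dvd g h5)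

private lemma split5 {x y q : ℕ} (h : Nat.gcd x y = 5) (e : x * y = q^2) :
    ∃ s r, x = 5*s^2 ∧ y = 5*r^2 := by
  obtain ⟨X, rfl⟩ : 5 ∣ x := h ▸ Nat.gcd_dvd_left x y
  obtain ⟨Y, rfl⟩ : 5 ∣ y := h ▸ Nat.gcd_dvd_right _ y
  have hXY : Nat.gcd X Y = 1 := by
    rw [Nat.gcd_mul_left] at h
    omega
  have h5q : 5 ∣ q := by
    have : (5:ℕ) ∣ q^2 := ⟨5*(X*Y), by rw [← e]; ring⟩
    exact Nat.Prime.dvd_of_dvd_pow Nat.prime_five this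
  obtain ⟨q', rfl⟩ := h5q
  have e' : X * Y = q'^2 := by
    have h25 : 25 * (X*Y) = 25 * q'^2 := by
      have : (5*X)*(5*Y) = (5*q')^2 := e
      linarith [this]
    omega
  obtain ⟨s, r, hs, hr⟩ := nat_split2 hXY e'
  exact ⟨s, r, by rw [hs], by rw [hr]⟩

/-! ### Pythagorean parametrization -/

private lemma pyth {x y z : ℕ} (h : x^2 + y^2 = z^2) (hx2 : x % 2 = 1)
    (g : Nat.gcd x y = 1) (hy : 0 < y) :
    ∃ p q : ℕ, 0 < q ∧ q < p ∧ Nat.gcd p q = 1 ∧ p % 2 + q % 2 = 1 ∧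
      x + q^2 = p^2 ∧ y = 2*(p*q) ∧ z = p^2 + q^2 := by
  have hz : 0 < z := by
    rcases Nat.eq_zero_or_pos z with h0 | h0
    · exfalso; rw [h0] at h; simp at h; omega
    · exact h0
  have pt : PythagoreanTriple (x:ℤ) (y:ℤ) (z:ℤ) := by
    have hh : ((x:ℤ))^2 + (y:ℤ)^2 = (z:ℤ)^2 := by exact_mod_cast h
    unfold PythagoreanTriple; linear_combination hh
  have gZ : Int.gcd (x:ℤ) (y:ℤ) = 1 := by rwa [Int.gcd_natCast_natCast]
  have hx2Z : (x:ℤ) % 2 = 1 := by omega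
  obtain ⟨m, n, hx', hy', hz', gmn, par, hm⟩ :=
    pt.coprime_classification' gZ hx2Z (by exact_mod_cast hz)
  have hmn : 0 < m * n := by
    have : (0:ℤ) < 2*m*n := by rw [← hy']; exact_mod_cast hy
    linarith
  have hm0 : 0 < m := by
    rcases lt_or_eq_of_le hm with h' | h'
    · exact h'
    · exfalso; rw [← h'] at hmn; simp at hmn
  have hn0 : 0 < n := by nlinarith
  have hxpos : (0:ℤ) < (x:ℤ) := by exact_mod_cast (show 0 < x by omega)
  have hnm : n < m := by nlinarith [hx' ▸ hxpos]
  refine ⟨m.natAbs, n.natAbs, ?_, ?_, gmn, ?_, ?_, ?_, ?_⟩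
  · omega
  · omega
  · omega
  · have e1 : (x:ℤ) + (n.natAbs:ℤ)^2 = (m.natAbs:ℤ)^2 := by
      rw [Int.natAbs_of_nonneg hm, Int.natAbs_of_nonneg hn0.le]; linarith
    exact_mod_cast e1
  · have e2 : (y:ℤ) = 2*((m.natAbs:ℤ)*(n.natAbs:ℤ)) := by
      rw [Int.natAbs_of_nonneg hm, Int.natAbs_of_nonneg hn0.le]; linarith
    exact_mod_cast e2
  · have e3 : (z:ℤ) = (m.natAbs:ℤ)^2 + (n.natAbs:ℤ)^2 := by
      rw [Int.natAbs_of_nonneg hm, Int.natAbs_of_nonneg hn0.le]; linarith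
    exact_mod_cast e3

/-! ### the system lemma -/

private lemma system_core {A B C D : ℕ} (hA : 0 < A) (hB : 0 < B) (hC : 0 < C) (hD : 0 < D)
    (gAB : Nat.gcd A B = 1) (gCD : Nat.gcd C D = 1)
    (h1 : A^2 + B^2 + D^2 = C^2) (h2 : A*B = 2*(C*D)) (hA2 : A % 2 = 0) :
    ∃ v u, P2 v u ∧ v^2 + u^2 ≤ C^2 + D^2 := by
  obtain ⟨A₀, rfl⟩ : ∃ A₀, A = 2*A₀ := ⟨A/2, by omega⟩
  have hA₀ : 0 < A₀ := by omega
  have hAB : A₀ * B = C * D := by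
    have h2' : 2*(A₀*B) = 2*(C*D) := by rw [← h2]; ring
    omega
  obtain ⟨k, hk⟩ : ∃ k, k = Nat.gcd A₀ C := ⟨_, rfl⟩
  have kpos : 0 < k := hk ▸ Nat.gcd_pos_of_pos_left C hA₀
  obtain ⟨u, hu⟩ : k ∣ A₀ := hk ▸ Nat.gcd_dvd_left _ _
  obtain ⟨v, hv⟩ : k ∣ C := hk ▸ Nat.gcd_dvd_right _ _
  have guv : Nat.Coprime u v := by
    have h' := Nat.coprime_div_gcd_div_gcd (m := A₀) (n := C) (hk ▸ kpos)
    rw [← hk, hu, hv, Nat.mul_div_cancel_left _ kpos, Nat.mul_div_cancel_left _ kpos] at h'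
    exact h'
  have upos : 0 < u := Nat.pos_of_ne_zero (fun h0 => by rw [h0, mul_zero] at hu; omega)
  have vpos : 0 < v := Nat.pos_of_ne_zero (fun h0 => by rw [h0, mul_zero] at hv; omega)
  have huB : u * B = v * D := by
    have h' : k * (u * B) = k * (v * D) := by
      rw [hu, hv] at hAB
      ring_nf at hAB ⊢
      exact hAB
    exact Nat.eq_of_mul_eq_mul_left kpos h'
  obtain ⟨w, hw⟩ : v ∣ B :=
    Nat.Coprime.dvd_of_dvd_mul_left guv.symm ⟨D, huB⟩
  have wpos : 0 < w := Nat.pos_of_ne_zero (fun h0 => by rw [h0, mul_zero] at hw; omega)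
  have hD' : D = u * w := by
    have h' : v * (u*w) = v * D := by
      rw [hw] at huB
      rw [← huB]; ring
    exact (Nat.eq_of_mul_eq_mul_left vpos h').symm
  have gkw : Nat.gcd k w = 1 := by
    have hd : Nat.gcd k w ∣ Nat.gcd (2*A₀) B :=
      Nat.dvd_gcd (dvd_trans (Nat.gcd_dvd_left k w) ⟨2*u, by rw [hu]; ring⟩)
        (dvd_trans (Nat.gcd_dvd_right k w) ⟨v, by rw [hw]; ring⟩)
    rw [gAB] at hd
    exact Nat.eq_one_of_dvd_one hd
  have hZ : (k:ℤ)^2*((v:ℤ)^2 - 4*(u:ℤ)^2) = (w:ℤ)^2*((v:ℤ)^2+(u:ℤ)^2) := by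
    have h1' : (2*(k*u))^2 + (v*w)^2 + (u*w)^2 = (k*v)^2 := by
      rw [← hu, ← hw, ← hD', ← hv]; exact h1
    have h1Z : (2*((k:ℤ)*(u:ℤ)))^2 + ((v:ℤ)*(w:ℤ))^2 + ((u:ℤ)*(w:ℤ))^2 = ((k:ℤ)*(v:ℤ))^2 := by
      exact_mod_cast h1'
    linear_combination -h1Z
  have kZ : (1:ℤ) ≤ (k:ℤ) := by exact_mod_cast kpos
  have uZ : (1:ℤ) ≤ (u:ℤ) := by exact_mod_cast upos
  have vZ : (1:ℤ) ≤ (v:ℤ) := by exact_mod_cast vpos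
  have wZ : (1:ℤ) ≤ (w:ℤ) := by exact_mod_cast wpos
  have hw2 : (0:ℤ) < (w:ℤ)^2 := pow_pos (by linarith) 2
  have hvu2 : (0:ℤ) < (v:ℤ)^2 + (u:ℤ)^2 := by
    have h1' : (0:ℤ) < (v:ℤ)^2 := pow_pos (by linarith) 2
    linarith [sq_nonneg (u:ℤ)]
  have hR : (0:ℤ) < (k:ℤ)^2*((v:ℤ)^2 - 4*(u:ℤ)^2) := by
    rw [hZ]; exact mul_pos hw2 hvu2
  have hv4uZ : 4*(u:ℤ)^2 < (v:ℤ)^2 := by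
    rcases mul_pos_iff.mp hR with ⟨-, h'⟩ | ⟨h', -⟩
    · linarith
    · exfalso; linarith [sq_nonneg (k:ℤ)]
  have hv4u : 4*u^2 < v^2 := by exact_mod_cast hv4uZ
  have h2uv : 2*u < v := by
    by_contra hcon
    push_neg at hcon
    have h' : v^2 ≤ (2*u)^2 := Nat.pow_le_pow_left hcon 2
    have h'' : (2*u)^2 = 4*u^2 := by ring
    omega
  have hE : k^2*(v^2 - 4*u^2) = w^2*(v^2+u^2) := by
    zify [hv4u.le]
    linarith [hZ]
  have hN : ((v^2-4*u^2)*(v^2+u^2)) * (k*w)^2 = (w^2*(v^2+u^2))^2 := by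
    calc ((v^2-4*u^2)*(v^2+u^2)) * (k*w)^2
        = (k^2*(v^2-4*u^2)) * (w^2*(v^2+u^2)) := by ring
      _ = (w^2*(v^2+u^2)) * (w^2*(v^2+u^2)) := by rw [hE]
      _ = (w^2*(v^2+u^2))^2 := by ring
  obtain ⟨e, he⟩ := sq_of_mul_sq (Nat.mul_pos kpos wpos) hN
  refine ⟨v, u, ⟨upos, h2uv, guv.symm, e, he⟩, ?_⟩
  have hvC : v ≤ C := by rw [hv]; exact Nat.le_mul_of_pos_left v kpos
  have huD : u ≤ D := by rw [hD']; exact Nat.le_mul_of_pos_right u wpos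
  have q1 := Nat.pow_le_pow_left hvC 2
  have q2 := Nat.pow_le_pow_left huD 2
  omega

private lemma system {A B C D : ℕ} (hA : 0 < A) (hB : 0 < B) (hC : 0 < C) (hD : 0 < D)
    (gAB : Nat.gcd A B = 1) (gCD : Nat.gcd C D = 1)
    (h1 : A^2 + B^2 + D^2 = C^2) (h2 : A*B = 2*(C*D)) :
    ∃ v u, P2 v u ∧ v^2 + u^2 ≤ C^2 + D^2 := by
  have hpar : A % 2 = 0 ∨ B % 2 = 0 := by
    by_contra hcon
    push_neg at hcon
    have hA1 : Odd A := Nat.odd_iff.mpr (by omega)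
    have hB1 : Odd B := Nat.odd_iff.mpr (by omega)
    have hodd : Odd (A*B) := hA1.mul hB1
    rw [Nat.odd_iff, h2] at hodd
    omega
  rcases hpar with h' | h'
  · exact system_core hA hB hC hD gAB gCD h1 h2 h'
  · exact system_core hB hA hC hD (by rwa [Nat.gcd_comm]) gCD (by omega)
      (by rw [mul_comm]; exact h2) h'

/-! ### descent from P2 to P1 -/

private lemma P2_to_P1 : ∀ n m l, P2 m l → m^2 + l^2 = n →
    ∃ c d, P1 c d ∧ 4*c^2 + d^2 ≤ n := by
  intro n
  induction n using Nat.strong_induction_on with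
  | _ n IH =>
    rintro m l ⟨hl, hml, gml, q, hq⟩ hn
    rcases Nat.even_or_odd m with hme | hmo
    · -- m even: direct translation to P1
      obtain ⟨m₀, rfl⟩ : ∃ k, m = 2*k := ⟨m/2, by obtain ⟨i, rfl⟩ := hme; omega⟩
      have hm₀l : l < m₀ := by omega
      have gm₀l : Nat.gcd m₀ l = 1 := by
        have hdvd : Nat.gcd m₀ l ∣ Nat.gcd (2*m₀) l :=
          Nat.dvd_gcd (dvd_trans (Nat.gcd_dvd_left _ _) ⟨2, by ring⟩) (Nat.gcd_dvd_right _ _)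
        rw [gml] at hdvd; exact Nat.eq_one_of_dvd_one hdvd
      have hl2 : l^2 < m₀^2 := Nat.pow_lt_pow_left hm₀l two_ne_zero
      have hsq : (2*m₀)^2 = 4*m₀^2 := by ring
      have h4 : (2*m₀)^2 - 4*l^2 = 4*(m₀^2 - l^2) := by omega
      have hq' : q^2 = 4*((m₀^2-l^2)*(4*m₀^2+l^2)) := by
        rw [← hq, h4, hsq]; ring
      have hqe : q % 2 = 0 := by
        rcases Nat.even_or_odd q with h' | h'
        · obtain ⟨i, rfl⟩ := h'; omega
        · exfalso
          have q8 := sq8_odd q (by obtain ⟨i, rfl⟩ := h'; omega)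
          omega
      obtain ⟨q₁, rfl⟩ : ∃ k, q = 2*k := ⟨q/2, by omega⟩
      have hq2 : (2*q₁)^2 = 4*q₁^2 := by ring
      have hfin : (m₀^2-l^2)*(4*m₀^2+l^2) = q₁^2 := by omega
      exact ⟨m₀, l, ⟨hl, hm₀l, gm₀l, q₁, hfin⟩, by omega⟩
    · -- m odd
      have hm2 : m % 2 = 1 := Nat.odd_iff.mp hmo
      have m8 := sq8_odd m hm2
      have h4l : 4*l^2 < m^2 := by
        have h1 : (2*l)^2 < m^2 := Nat.pow_lt_pow_left hml two_ne_zero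
        have h2 : (2*l)^2 = 4*l^2 := by ring
        omega
      have h5m : (m^2-4*l^2) + 4*(m^2+l^2) = 5*m^2 := by omega
      have h5l : (m^2-4*l^2) + 5*l^2 = m^2+l^2 := by omega
      rcases gcd_fiveB gml h5m h5l with hg | hg
      · -- gcd = 1 : both factors are squares
        obtain ⟨s, r, hs, hr⟩ := nat_split2 hg hq
        -- s is odd
        have hs2 : s % 2 = 1 := by
          rcases Nat.even_or_odd s with h' | h'
          · exfalso
            rcases sq8_even s (by obtain ⟨i, rfl⟩ := h'; omega) with s8 | s8 <;>
            · have l8 := sq8 l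
              omega
          · obtain ⟨i, rfl⟩ := h'; omega
        -- T1 : s² + (2l)² = m²
        have ht1 : s^2 + (2*l)^2 = m^2 := by
          have h' : (2*l)^2 = 4*l^2 := by ring
          omega
        have gsl : Nat.gcd s l = 1 :=
          cop_leg2 (j := 1) (k := 4) (by omega) gml
        obtain ⟨p, q', hq'0, hq'p, gpq, -, hsp, h2l, hmz⟩ :=
          pyth ht1 hs2 (cop_double hs2 gsl) (by omega)
        have hlpq : l = p*q' := by omega
        -- T2 : m² + l² = r²
        obtain ⟨α, β, hβ0, hβα, gαβ, -, hmα, hlα, hrα⟩ :=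
          pyth (show m^2 + l^2 = r^2 from hr) hm2 gml hl
        -- the system
        have hsys1 : p^2 + q'^2 + β^2 = α^2 := by omega
        have hsys2 : p*q' = 2*(α*β) := by omega
        obtain ⟨v, u, hP2, hvu⟩ :=
          system (by omega) hq'0 (by omega) hβ0 gpq gαβ hsys1 hsys2
        -- size chasing
        have hm3 : 3 ≤ m := by omega
        have hm9 : 9 ≤ m^2 := by
          have := Nat.pow_le_pow_left hm3 2
          omega
        have hr2 : 2 ≤ r := by
          by_contra h'
          push_neg at h'
          have : r^2 ≤ 1^2 := Nat.pow_le_pow_left (by omega) 2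
          omega
        have hrr : r < r^2 := by
          have h1 : 2*r ≤ r*r := Nat.mul_le_mul_right r hr2
          have h2 : r^2 = r*r := by ring
          omega
        have hlt : v^2+u^2 < n := by omega
        obtain ⟨c, d, hP1, hle⟩ := IH (v^2+u^2) hlt v u hP2 rfl
        exact ⟨c, d, hP1, by omega⟩
      · -- gcd = 5 : direct descent to P1
        obtain ⟨s, r, hs, hr⟩ := split5 hg hq
        have hsl : s^2 + l^2 = r^2 := by omega
        have h4rs : 4*r^2 + s^2 = m^2 := by omega
        have grs : Nat.gcd r s = 1 := by
          rw [hs, hr, Nat.gcd_mul_left] at hg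
          exact cop_of_sq (by omega)
        have hspos : 0 < s := by
          rcases Nat.eq_zero_or_pos s with h0 | h0
          · exfalso; rw [h0] at hs; simp at hs; omega
          · exact h0
        have hsr : s < r := by
          by_contra h'
          push_neg at h'
          have h'' : r^2 ≤ s^2 := Nat.pow_le_pow_left h' 2
          have hl1 : 1 ≤ l^2 := by
            have := Nat.pow_le_pow_left hl 2
            simpa using this
          omega
        have e1 : r^2 - s^2 = l^2 := by omega
        have efin : (r^2 - s^2)*(4*r^2+s^2) = (l*m)^2 := by
          rw [e1, h4rs]; ring
        exact ⟨r, s, ⟨hspos, hsr, grs, l*m, efin⟩, by omega⟩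

private lemma noP1 : ∀ n c d, P1 c d → 4*c^2 + d^2 = n → False := by
  intro n
  induction n using Nat.strong_induction_on with
  | _ n IH =>
    rintro c d ⟨hd, hdc, gcd1, q, hq⟩ hn
    have hd2c : d^2 < c^2 := Nat.pow_lt_pow_left hdc two_ne_zero
    have h5c : (c^2-d^2) + (4*c^2+d^2) = 5*c^2 := by omega
    have h5d : 4*(c^2-d^2) + 5*d^2 = 4*c^2+d^2 := by omega
    -- if c is even then d is odd
    have hparcd : c % 2 = 0 → d % 2 = 1 := by
      intro hc2
      rcases Nat.even_or_odd d with h' | h'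
      · exfalso
        obtain ⟨i, rfl⟩ := h'
        have h2c : (2:ℕ) ∣ c := ⟨c/2, by omega⟩
        have h2d : (2:ℕ) ∣ i + i := ⟨i, by omega⟩
        have := Nat.dvd_gcd h2c h2d
        rw [gcd1] at this
        omega
      · obtain ⟨i, rfl⟩ := h'; omega
    rcases gcd_five gcd1 h5c h5d with hg | hg
    · -- gcd of factors is 1
      obtain ⟨s, r, hs, hr⟩ := nat_split2 hg hq
      -- c must be odd
      have hc2 : c % 2 = 1 := by
        rcases Nat.even_or_odd c with h' | h'
        · exfalso
          have hc0 : c % 2 = 0 := by obtain ⟨i, rfl⟩ := h'; omega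
          have d8 := sq8_odd d (hparcd hc0)
          rcases sq8_even c hc0 with c8 | c8 <;>
          · have s8 := sq8 s
            omega
        · obtain ⟨i, rfl⟩ := h'; omega
      have c8 := sq8_odd c hc2
      rcases Nat.even_or_odd d with hde | hdo
      · -- d even : the long branch
        have hd0 : d % 2 = 0 := by obtain ⟨i, rfl⟩ := hde; omega
        have d8' := sq8_even d hd0
        -- s odd
        have hs2 : s % 2 = 1 := by
          rcases Nat.even_or_odd s with h' | h'
          · exfalso
            rcases sq8_even s (by obtain ⟨i, rfl⟩ := h'; omega) with s8 | s8 <;> omega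
          · obtain ⟨i, rfl⟩ := h'; omega
        -- r even
        have hr0 : r % 2 = 0 := by
          rcases Nat.even_or_odd r with h' | h'
          · obtain ⟨i, rfl⟩ := h'; omega
          · exfalso
            have r8 := sq8_odd r (by obtain ⟨i, rfl⟩ := h'; omega)
            omega
        obtain ⟨t, rfl⟩ : ∃ k, r = 2*k := ⟨r/2, by omega⟩
        -- T1 : s² + d² = c²
        have ht1 : s^2 + d^2 = c^2 := by omega
        have gsd : Nat.gcd s d = 1 := cop_leg2 (j := 1) (k := 1) (by omega) gcd1
        obtain ⟨p, q', hq'0, hq'p, gpq, -, hsp, hdl, hcz⟩ := pyth ht1 hs2 gsd hd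
        -- t² = c² + (pq)²
        have hR : (2*t)^2 = 4*t^2 := by ring
        have hD : (2*(p*q'))^2 = 4*(p*q')^2 := by ring
        have hdd : d^2 = (2*(p*q'))^2 := by rw [hdl]
        have ht : c^2 + (p*q')^2 = t^2 := by omega
        -- T2
        have gcpq : Nat.gcd c (p*q') = 1 := by
          have hdvd : Nat.gcd c (p*q') ∣ Nat.gcd c d :=
            Nat.dvd_gcd (Nat.gcd_dvd_left _ _)
              (dvd_trans (Nat.gcd_dvd_right _ _) ⟨2, by omega⟩)
          rw [gcd1] at hdvd
          exact Nat.eq_one_of_dvd_one hdvd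
        have hpq0 : 0 < p*q' := Nat.mul_pos (by omega) hq'0
        obtain ⟨α, β, hβ0, hβα, gαβ, -, hcα, hpqα, htα⟩ := pyth ht hc2 gcpq hpq0
        -- system
        have hsys1 : p^2 + q'^2 + β^2 = α^2 := by omega
        have hsys2 : p*q' = 2*(α*β) := by omega
        obtain ⟨v, u, hP2, hvu⟩ :=
          system (by omega) hq'0 (by omega) hβ0 gpq gαβ hsys1 hsys2
        -- sizes : v²+u² ≤ α²+β² = t < n
        have htpos : 0 < t := by
          rcases Nat.eq_zero_or_pos t with h0 | h0
          · exfalso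
            rw [h0] at ht
            simp at ht
            omega
          · exact h0
        have htt : t ≤ t*t := Nat.le_mul_of_pos_left t htpos
        have ht2 : t^2 = t*t := by ring
        have htn : t < n := by omega
        obtain ⟨c', d', hP1', hle'⟩ := P2_to_P1 (v^2+u^2) v u hP2 rfl
        exact IH (4*c'^2+d'^2) (by omega) c' d' hP1' rfl
      · -- d odd : impossible mod 8
        have d8 := sq8_odd d (by obtain ⟨i, rfl⟩ := hdo; omega)
        have r8 := sq8 r
        omega
    · -- gcd of factors is 5
      obtain ⟨s, r, hs, hr⟩ := split5 hg hq
      have grs : Nat.gcd r s = 1 := by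
        rw [hs, hr, Nat.gcd_mul_left] at hg
        exact cop_of_sq (by omega)
      have hspos : 0 < s := by
        rcases Nat.eq_zero_or_pos s with h0 | h0
        · exfalso; rw [h0] at hs; simp at hs; omega
        · exact h0
      have hrd : r^2 = d^2 + 4*s^2 := by omega
      have hcr : c^2 = r^2 + s^2 := by omega
      -- c must be odd
      have hc2 : c % 2 = 1 := by
        rcases Nat.even_or_odd c with h' | h'
        · exfalso
          have hc0 : c % 2 = 0 := by obtain ⟨i, rfl⟩ := h'; omega
          have d8 := sq8_odd d (hparcd hc0)
          rcases sq8_even c hc0 with c8 | c8 <;>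
          · have s8 := sq8 s
            omega
        · obtain ⟨i, rfl⟩ := h'; omega
      have c8 := sq8_odd c hc2
      rcases Nat.even_or_odd d with hde | hdo
      · -- d even : direct descent to a smaller P1
        have hd0 : d % 2 = 0 := by obtain ⟨i, rfl⟩ := hde; omega
        obtain ⟨δ, rfl⟩ : ∃ k, d = 2*k := ⟨d/2, by omega⟩
        have hδd : (2*δ)^2 = 4*δ^2 := by ring
        -- r is even
        have hr0 : r % 2 = 0 := by
          rcases Nat.even_or_odd r with h' | h'
          · obtain ⟨i, rfl⟩ := h'; omega
          · exfalso
            have r8 := sq8_odd r (by obtain ⟨i, rfl⟩ := h'; omega)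
            have hr4 : r^2 = 4*(δ^2 + s^2) := by omega
            omega
        obtain ⟨ρ, rfl⟩ : ∃ k, r = 2*k := ⟨r/2, by omega⟩
        have hρr : (2*ρ)^2 = 4*ρ^2 := by ring
        have hρ : ρ^2 = δ^2 + s^2 := by omega
        have hc4 : 4*ρ^2 + s^2 = c^2 := by omega
        have gρs : Nat.gcd ρ s = 1 := by
          have hdvd : Nat.gcd ρ s ∣ Nat.gcd (2*ρ) s :=
            Nat.dvd_gcd (dvd_trans (Nat.gcd_dvd_left _ _) ⟨2, by ring⟩) (Nat.gcd_dvd_right _ _)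
          rw [grs] at hdvd
          exact Nat.eq_one_of_dvd_one hdvd
        have hsρ : s < ρ := by
          by_contra h'
          push_neg at h'
          have h'' : ρ^2 ≤ s^2 := Nat.pow_le_pow_left h' 2
          have hδ1 : 1 ≤ δ^2 := by
            have := Nat.pow_le_pow_left (show 1 ≤ δ by omega) 2
            simpa using this
          omega
        have e1 : ρ^2 - s^2 = δ^2 := by omega
        have efin : (ρ^2 - s^2)*(4*ρ^2+s^2) = (δ*c)^2 := by
          rw [e1, hc4]; ring
        have hc2pos : 1 ≤ c^2 := by
          have := Nat.pow_le_pow_left (show 1 ≤ c by omega) 2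
          simpa using this
        exact IH (4*ρ^2+s^2) (by omega) ρ s ⟨hspos, hsρ, gρs, δ*c, efin⟩ rfl
      · -- d odd
        have hd1 : d % 2 = 1 := by obtain ⟨i, rfl⟩ := hdo; omega
        have d8 := sq8_odd d hd1
        -- r is odd
        have hr1 : r % 2 = 1 := by
          rcases Nat.even_or_odd r with h' | h'
          · exfalso
            have s8 := sq8 s
            rcases sq8_even r (by obtain ⟨i, rfl⟩ := h'; omega) with r8 | r8 <;> omega
          · obtain ⟨i, rfl⟩ := h'; omega
        -- T1 : d² + (2s)² = r²
        have ht1 : d^2 + (2*s)^2 = r^2 := by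
          have h' : (2*s)^2 = 4*s^2 := by ring
          omega
        have gsd : Nat.gcd s d = 1 := cop_leg2 (j := 5) (k := 1) (by omega) gcd1
        have gd2s : Nat.gcd d (2*s) = 1 := cop_double hd1 (by rwa [Nat.gcd_comm] at gsd)
        obtain ⟨α, β, hβ0, hβα, gαβ, -, hdα, hsα, hrα⟩ := pyth ht1 hd1 gd2s (by omega)
        have hsαβ : s = α*β := by omega
        -- T2 : r² + s² = c²
        have ht2 : r^2 + s^2 = c^2 := by omega
        obtain ⟨p, q', hq'0, hq'p, gpq, -, hrp, hspq, hcz⟩ := pyth ht2 hr1 grs hspos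
        -- system
        have hsys1 : α^2 + β^2 + q'^2 = p^2 := by omega
        have hsys2 : α*β = 2*(p*q') := by omega
        obtain ⟨v, u, hP2, hvu⟩ :=
          system (by omega) hβ0 (by omega) hq'0 gαβ gpq hsys1 hsys2
        -- sizes : v²+u² ≤ p²+q'² = c < n
        have hcc : c ≤ c*c := Nat.le_mul_of_pos_left c (by omega)
        have hc2' : c^2 = c*c := by ring
        have hcn : c < n := by omega
        obtain ⟨c', d', hP1', hle'⟩ := P2_to_P1 (v^2+u^2) v u hP2 rfl
        exact IH (4*c'^2+d'^2) (by omega) c' d' hP1' rfl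

theorem stmt_11 :
    ¬ ∃ a b c d : ℕ, 0 < a ∧ 0 < b ∧ 0 < c ∧ 0 < d ∧
      Even a ∧ Nat.gcd a b = 1 ∧ Nat.gcd c d = 1 ∧ d < c ∧
      b ^ 2 * (c ^ 2 - d ^ 2) = a ^ 2 * (4 * c ^ 2 + d ^ 2) := by
  rintro ⟨a, b, c, d, ha, hb, hc, hd, -, -, hcd, hdc, heq⟩
  have hsq : d^2 < c^2 := Nat.pow_lt_pow_left hdc two_ne_zero
  have key : ((c^2 - d^2) * (4*c^2 + d^2)) * b^2 = (a * (4*c^2 + d^2))^2 := by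
    have h' : (c^2-d^2) * (4*c^2+d^2) * b^2 = (b^2 * (c^2-d^2)) * (4*c^2+d^2) := by ring
    rw [h', heq]; ring
  obtain ⟨e, he⟩ := sq_of_mul_sq hb key
  exact noP1 (4*c^2+d^2) c d ⟨hd, hdc, hcd, e, he⟩ rfl
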